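/- arXiv:2601.19772 — 2 statements merged into one kernel-verified Lean document; each statement's English description precedes it below -/
import Mathlib

section
/- If C is a groupoid, then the monoid M(C) is a group: for every normal form w = (f₁, …, fₙ), the reversed entrywise-inverted word w̄ = (fₙ⁻¹, …, f₁⁻¹) is also a normal form, and w • w̄ = [] = w̄ • w. -/
open CategoryTheory

/-- A word of morphisms in a category `C`: a finite list of morphisms, each recorded
with its source and target. -/
abbrev CatWord (C : Type*) [Category C] : Type _ := List (Σ a b : C, a ⟶ b)

/-- The rewrite relation on words of morphisms: delete an identity entry, or replace
two adjacent composable entries `(f, g)` by the single entry `g ∘ f`. -/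
inductive RwStep {C : Type*} [Category C] : CatWord C → CatWord C → Prop
  | del (u v : CatWord C) (a : C) :
      RwStep (u ++ ⟨a, a, 𝟙 a⟩ :: v) (u ++ v)
  | comp (u v : CatWord C) {a b c : C} (f : a ⟶ b) (g : b ⟶ c) :
      RwStep (u ++ ⟨a, b, f⟩ :: ⟨b, c, g⟩ :: v) (u ++ ⟨a, c, f ≫ g⟩ :: v)

/-- A word is a normal form if no rewrite step applies to it. -/
def IsNormalForm {C : Type*} [Category C] (w : CatWord C) : Prop :=
  ∀ z : CatWord C, ¬ RwStep w z

/-- The reversed entrywise-inverted word `w̄` of a word `w` in a groupoid. -/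
def wordInv {C : Type*} [Groupoid C] (w : CatWord C) : CatWord C :=
  w.reverse.map fun x => ⟨x.2.1, x.1, Groupoid.inv x.2.2⟩

section Aux
variable {C : Type*} [Category C]

def IsId (x : Σ a b : C, a ⟶ b) : Prop := ∃ a, x = ⟨a, a, 𝟙 a⟩

lemma isId_cases {a b : C} {f : a ⟶ b} (h : IsId ⟨a, b, f⟩) :
    ∃ h : a = b, f = eqToHom h := by
  obtain ⟨e, he⟩ := h
  obtain ⟨rfl, he⟩ := Sigma.mk.inj_iff.mp he
  obtain ⟨rfl, he⟩ := Sigma.mk.inj_iff.mp (eq_of_heq he)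
  exact ⟨rfl, by simpa using eq_of_heq he⟩

lemma isId_id (a : C) : IsId (⟨a, a, 𝟙 a⟩ : Σ a b : C, a ⟶ b) := ⟨a, rfl⟩

open scoped Classical in
noncomputable def consNF : (Σ a b : C, a ⟶ b) → CatWord C → CatWord C
  | x, [] => if IsId x then [] else [x]
  | x, y :: t =>
    if IsId x then y :: t
    else if h : x.2.1 = y.1 then consNF ⟨x.1, y.2.1, x.2.2 ≫ eqToHom h ≫ y.2.2⟩ t
    else x :: y :: t

lemma consNF_id {x : Σ a b : C, a ⟶ b} (hx : IsId x) (l : CatWord C) :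
    consNF x l = l := by cases l <;> simp [consNF, hx]

lemma consNF_nil {x : Σ a b : C, a ⟶ b} (hx : ¬ IsId x) : consNF x [] = [x] := by
  simp [consNF, hx]

lemma consNF_comp {a b c : C} {f : a ⟶ b} {g : b ⟶ c} (hx : ¬ IsId ⟨a, b, f⟩)
    (t : CatWord C) :
    consNF ⟨a, b, f⟩ (⟨b, c, g⟩ :: t) = consNF ⟨a, c, f ≫ g⟩ t := by
  simp [consNF, hx]

lemma consNF_ncomp {x y : Σ a b : C, a ⟶ b} (hx : ¬ IsId x) (h : x.2.1 ≠ y.1)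
    (t : CatWord C) : consNF x (y :: t) = x :: y :: t := by
  simp [consNF, hx, h]

noncomputable def nfc (w : CatWord C) : CatWord C := w.foldr consNF []

def Nrm (w : CatWord C) : Prop :=
  (∀ x ∈ w, ¬ IsId x) ∧ w.Chain' (fun x y => x.2.1 ≠ y.1)

lemma Nrm.tail {x : Σ a b : C, a ⟶ b} {t : CatWord C} (h : Nrm (x :: t)) : Nrm t :=
  ⟨fun y hy => h.1 y (List.mem_cons_of_mem _ hy), h.2.tail⟩

lemma Nrm.head {x : Σ a b : C, a ⟶ b} {t : CatWord C} (h : Nrm (x :: t)) : ¬ IsId x :=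
  h.1 x List.mem_cons_self

lemma nrm_nil : Nrm ([] : CatWord C) := ⟨by simp, List.isChain_nil⟩

lemma nrm_cons_cons {x y : Σ a b : C, a ⟶ b} {t : CatWord C} (h : Nrm (x :: y :: t)) :
    x.2.1 ≠ y.1 := (List.isChain_cons_cons.mp h.2).1

lemma nrm_cons {x : Σ a b : C, a ⟶ b} {t : CatWord C} (hx : ¬ IsId x) (ht : Nrm t)
    (hc : ∀ y t', t = y :: t' → x.2.1 ≠ y.1) : Nrm (x :: t) := by
  refine ⟨?_, ?_⟩
  · intro z hz
    rcases List.mem_cons.mp hz with rfl | hz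
    · exact hx
    · exact ht.1 z hz
  · cases t with
    | nil => exact List.isChain_singleton _
    | cons y t' => exact List.isChain_cons_cons.mpr ⟨hc y t' rfl, ht.2⟩

lemma step_cons {x : Σ a b : C, a ⟶ b} {t z : CatWord C} (h : RwStep t z) :
    RwStep (x :: t) (x :: z) := by
  cases h with
  | del u v a => exact RwStep.del (x :: u) v a
  | comp u v f g => exact RwStep.comp (x :: u) v f g

lemma nrm_of_isNormalForm {w : CatWord C} (hw : IsNormalForm w) : Nrm w := by
  induction w with
  | nil => exact nrm_nil
  | cons x t ih =>
    have hx : ¬ IsId x := by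
      rintro ⟨a, rfl⟩
      exact hw t (RwStep.del [] t a)
    have ht : Nrm t := ih (fun z hz => hw (x :: z) (step_cons hz))
    refine nrm_cons hx ht ?_
    rintro y t' rfl h
    obtain ⟨a, b, f⟩ := x
    obtain ⟨b', c, g⟩ := y
    cases h
    exact hw _ (RwStep.comp [] t' f g)

lemma not_nrm_del {a : C} (v : CatWord C) :
    ∀ u : CatWord C, ¬ Nrm (u ++ ⟨a, a, 𝟙 a⟩ :: v)
  | [], h => h.head (isId_id a)
  | _ :: u, h => not_nrm_del v u h.tail

lemma not_nrm_comp {a b c : C} (f : a ⟶ b) (g : b ⟶ c) (v : CatWord C) :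
    ∀ u : CatWord C, ¬ Nrm (u ++ ⟨a, b, f⟩ :: ⟨b, c, g⟩ :: v)
  | [], h => nrm_cons_cons h rfl
  | _ :: u, h => not_nrm_comp f g v u h.tail

lemma isNormalForm_of_nrm {w : CatWord C} (hw : Nrm w) : IsNormalForm w := by
  intro z hz
  cases hz with
  | del u v a => exact not_nrm_del v u hw
  | comp u v f g => exact not_nrm_comp f g v u hw

lemma nrm_consNF (x : Σ a b : C, a ⟶ b) {l : CatWord C} (hl : Nrm l) :
    Nrm (consNF x l) := by
  induction l generalizing x with
  | nil =>
    by_cases hx : IsId x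
    · rw [consNF_id hx]; exact nrm_nil
    · rw [consNF_nil hx]
      exact nrm_cons hx nrm_nil (by simp)
  | cons y t ih =>
    by_cases hx : IsId x
    · rw [consNF_id hx]; exact hl
    · by_cases h : x.2.1 = y.1
      · obtain ⟨a, b, f⟩ := x
        obtain ⟨b', c, g⟩ := y
        cases h
        rw [consNF_comp hx]
        exact ih _ hl.tail
      · rw [consNF_ncomp hx h]
        refine nrm_cons hx hl ?_
        intro z t' hzt
        injection hzt with h1 h2
        subst h1
        exact h

lemma consNF_of_nrm {x : Σ a b : C, a ⟶ b} {t : CatWord C} (h : Nrm (x :: t)) :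
    consNF x t = x :: t := by
  cases t with
  | nil => exact consNF_nil h.head
  | cons y t' => exact consNF_ncomp h.head (nrm_cons_cons h) t'

lemma nrm_nfc (w : CatWord C) : Nrm (nfc w) := by
  induction w with
  | nil => exact nrm_nil
  | cons x t ih => exact nrm_consNF x ih

lemma nfc_eq_self {w : CatWord C} (hw : Nrm w) : nfc w = w := by
  induction w with
  | nil => rfl
  | cons x t ih =>
    show consNF x (nfc t) = x :: t
    rw [ih hw.tail, consNF_of_nrm hw]

lemma consNF_consNF {t : CatWord C} (ht : Nrm t) :
    ∀ {a b c : C} (f : a ⟶ b) (g : b ⟶ c),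
      consNF ⟨a, b, f⟩ (consNF ⟨b, c, g⟩ t) = consNF ⟨a, c, f ≫ g⟩ t := by
  induction t with
  | nil =>
    intro a b c f g
    by_cases hg : IsId ⟨b, c, g⟩
    · obtain ⟨rfl, rfl⟩ := isId_cases hg
      rw [consNF_id hg]
      simp
    · rw [consNF_nil hg]
      by_cases hf : IsId ⟨a, b, f⟩
      · obtain ⟨rfl, rfl⟩ := isId_cases hf
        rw [consNF_id hf]
        simp [consNF_nil hg]
      · rw [consNF_comp hf]
  | cons y t' ih =>
    intro a b c f g
    by_cases hg : IsId ⟨b, c, g⟩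
    · obtain ⟨rfl, rfl⟩ := isId_cases hg
      rw [consNF_id hg]
      simp
    · by_cases h : c = y.1
      · obtain ⟨c', d, k⟩ := y
        subst h
        rw [consNF_comp hg]
        rw [ih ht.tail f (g ≫ k)]
        by_cases hfg : IsId ⟨a, c, f ≫ g⟩
        · obtain ⟨rfl, h2⟩ := isId_cases hfg
          rw [consNF_id hfg]
          have hk : f ≫ g ≫ k = k := by
            rw [← Category.assoc, h2]
            simp
          rw [hk, consNF_of_nrm ht]
        · rw [consNF_comp hfg, Category.assoc]
      · rw [consNF_ncomp hg h t']
        by_cases hf : IsId ⟨a, b, f⟩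
        · obtain ⟨rfl, rfl⟩ := isId_cases hf
          rw [consNF_id hf]
          simp [consNF_ncomp hg h]
        · rw [consNF_comp hf]

lemma nfc_cons (x : Σ a b : C, a ⟶ b) (l : CatWord C) :
    nfc (x :: l) = consNF x (nfc l) := rfl

lemma nfc_append_middle_del {a : C} (v : CatWord C) :
    ∀ u : CatWord C, nfc (u ++ ⟨a, a, 𝟙 a⟩ :: v) = nfc (u ++ v)
  | [] => consNF_id (isId_id a) _
  | x :: u => by
    rw [List.cons_append, List.cons_append, nfc_cons, nfc_cons,
      nfc_append_middle_del v u]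

lemma nfc_append_middle_comp {a b c : C} (f : a ⟶ b) (g : b ⟶ c) (v : CatWord C) :
    ∀ u : CatWord C, nfc (u ++ ⟨a, b, f⟩ :: ⟨b, c, g⟩ :: v) = nfc (u ++ ⟨a, c, f ≫ g⟩ :: v)
  | [] => consNF_consNF (nrm_nfc v) f g
  | x :: u => by
    rw [List.cons_append, List.cons_append, nfc_cons, nfc_cons,
      nfc_append_middle_comp f g v u]

lemma nfc_step {u v : CatWord C} (h : RwStep u v) : nfc u = nfc v := by
  cases h with
  | del u v a => exact nfc_append_middle_del v u
  | comp u v f g => exact nfc_append_middle_comp f g v u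

lemma nfc_rtg {u v : CatWord C} (h : Relation.ReflTransGen RwStep u v) : nfc u = nfc v := by
  induction h with
  | refl => rfl
  | tail _ h ih => exact ih.trans (nfc_step h)

end Aux

section Grpd
variable {C : Type*} [Groupoid C]

lemma wordInv_cons (x : Σ a b : C, a ⟶ b) (t : CatWord C) :
    wordInv (x :: t) = wordInv t ++ [⟨x.2.1, x.1, Groupoid.inv x.2.2⟩] := by
  simp [wordInv]

lemma wordInv_wordInv (w : CatWord C) : wordInv (wordInv w) = w := by
  simp only [wordInv, List.map_reverse, List.reverse_reverse, List.map_map]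
  have h : ∀ x ∈ w, ((fun x : Σ a b : C, a ⟶ b => (⟨x.2.1, x.1, Groupoid.inv x.2.2⟩ : Σ a b : C, a ⟶ b)) ∘
      fun x : Σ a b : C, a ⟶ b => (⟨x.2.1, x.1, Groupoid.inv x.2.2⟩ : Σ a b : C, a ⟶ b)) x = id x := by
    rintro ⟨a, b, f⟩ _
    simp [Function.comp]
  rw [List.map_congr_left h, List.map_id]

lemma reduce_cancel : ∀ w : CatWord C, Relation.ReflTransGen RwStep (wordInv w ++ w) []
  | [] => .refl
  | x :: t => by
    obtain ⟨a, b, f⟩ := x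
    have e : wordInv (⟨a, b, f⟩ :: t) ++ (⟨a, b, f⟩ :: t)
        = wordInv t ++ ⟨b, a, Groupoid.inv f⟩ :: ⟨a, b, f⟩ :: t := by
      rw [wordInv_cons]; simp
    rw [e]
    refine .head (RwStep.comp (wordInv t) t (Groupoid.inv f) f) ?_
    rw [Groupoid.inv_comp]
    exact .head (RwStep.del (wordInv t) t b) (reduce_cancel t)

lemma nrm_wordInv {w : CatWord C} (hw : Nrm w) : Nrm (wordInv w) := by
  constructor
  · intro x hx
    simp only [wordInv, List.mem_map, List.mem_reverse] at hx
    obtain ⟨y, hy, rfl⟩ := hx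
    obtain ⟨a, b, f⟩ := y
    intro hid
    have hid' : IsId (⟨b, a, Groupoid.inv f⟩ : Σ a b : C, a ⟶ b) := hid
    obtain ⟨h, h2⟩ := isId_cases hid'
    subst h
    have hf : f = 𝟙 _ := by
      have := congrArg Groupoid.inv h2
      simpa using this
    subst hf
    exact hw.1 _ hy (isId_id _)
  · rw [wordInv, List.Chain', List.isChain_map, List.isChain_reverse]
    refine hw.2.imp ?_
    intro x y h
    simp only [flip]
    exact fun e => h e.symm

end Grpd

/-- If `C` is a groupoid, then the monoid `M(C)` is a group: for every normal form `w`,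
the reversed entrywise-inverted word `w̄` is also a normal form, and
`w • w̄ = [] = w̄ • w`, where `x • y := nf (y ++ x)`.  Here `nf` is any function
assigning to each word its (unique) normal form. -/
theorem normal_forms_group (C : Type*) [Groupoid C] (nf : CatWord C → CatWord C)
    (hnf : ∀ w : CatWord C, Relation.ReflTransGen RwStep w (nf w) ∧ IsNormalForm (nf w))
    (w : CatWord C) (hw : IsNormalForm w) :
    IsNormalForm (wordInv w) ∧
      -- `w • w̄ = []` and `w̄ • w = []`
      nf (wordInv w ++ w) = [] ∧ nf (w ++ wordInv w) = [] := by
  have nf_eq : ∀ u : CatWord C, nf u = nfc u := fun u => by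
    have h1 := (hnf u).1
    have h2 := nrm_of_isNormalForm (hnf u).2
    rw [← nfc_eq_self h2, nfc_rtg h1]
  have key : ∀ u : CatWord C, Relation.ReflTransGen RwStep u [] → nf u = [] := by
    intro u hu
    rw [nf_eq, nfc_rtg hu]; rfl
  refine ⟨isNormalForm_of_nrm (nrm_wordInv (nrm_of_isNormalForm hw)), ?_, ?_⟩
  · exact key _ (reduce_cancel w)
  · refine key _ ?_
    have := reduce_cancel (wordInv w)
    rwa [wordInv_wordInv] at this
end

section
/- Let M be a partial group, n ≥ 1, f, g ∈ M, and let w₀, w₁, …, w_{2n} be nonempty words in M with w₀ = [f], w_{2n} = [g], and w_{2k+1} ⇝* w_{2k} and w_{2k+1} ⇝* w_{2k+2} for all 0 ≤ k ≤ n−1 (a zig-zag connecting [f] to [g]). Define the word w as the concatenation of the odd-indexed words taken alternately plain and formally inverted, namely w := w₁ ++ w₃⁻¹ ++ w₅ ++ w₇⁻¹ ++ ⋯ ++ w_{2n−1} when n is odd, and w := w₁ ++ w₃⁻¹ ++ w₅ ++ ⋯ ++ w_{2n−1}⁻¹ ++ w_{2n} when n is even. Then w ⇝* [f] and w ⇝*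 [g]. -/
/-- A partial group in Chermak's sense: a nonempty set `M` with a domain `D` of words
containing all words of length at most `1`, a product `Π` (here `pi`, given as a total
function whose axioms only concern words in `D`), and an involution `inv`. -/
structure PartialGroup (M : Type u) where
  /-- The underlying set is nonempty. -/
  nonempty : Nonempty M
  /-- The set of words on which the product is defined. -/
  D : Set (List M)
  /-- The product `Π : D → M` (extended arbitrarily to all words). -/
  pi : List M → M
  /-- The inversion `x ↦ x⁻¹`. -/
  inv : M → M
  /-- `D` contains all words of length at most `1`. -/
  mem_D_of_length_le_one : ∀ w : List M, w.length ≤ 1 → w ∈ D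
  /-- (i) `Π [f] = f`. -/
  pi_single : ∀ f : M, pi [f] = f
  /-- (ii) if `u ++ v ∈ D` then `u ∈ D`. -/
  mem_D_of_append_left : ∀ u v : List M, u ++ v ∈ D → u ∈ D
  /-- (ii) if `u ++ v ∈ D` then `v ∈ D`. -/
  mem_D_of_append_right : ∀ u v : List M, u ++ v ∈ D → v ∈ D
  /-- (iii) if `u ++ v ++ w ∈ D` then `u ++ [Π v] ++ w ∈ D`. -/
  mem_D_contract : ∀ u v w : List M, u ++ v ++ w ∈ D → u ++ [pi v] ++ w ∈ D
  /-- (iii) if `u ++ v ++ w ∈ D` then `Π (u ++ v ++ w) = Π (u ++ [Π v] ++ w)`. -/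
  pi_contract : ∀ u v w : List M, u ++ v ++ w ∈ D → pi (u ++ v ++ w) = pi (u ++ [pi v] ++ w)
  /-- `inv` is an involution. -/
  inv_inv : ∀ x : M, inv (inv x) = x
  /-- (iv) if `w ∈ D` then `w⁻¹ ++ w ∈ D`, where `w⁻¹` is the entrywise-inverted
  reverse of `w`. -/
  mem_D_inv_append : ∀ w ∈ D, (w.reverse.map inv) ++ w ∈ D
  /-- (iv) if `w ∈ D` then `Π (w⁻¹ ++ w) = 1 = Π []`. -/
  pi_inv_append : ∀ w ∈ D, pi ((w.reverse.map inv) ++ w) = pi []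

/-- The formal inverse of a word: reverse it and invert each entry. -/
def PartialGroup.wInv {M : Type u} (P : PartialGroup M) (w : List M) : List M :=
  w.reverse.map P.inv

/-- The single-contraction relation `⇝` on words in a partial group:
`u ++ [a, b] ++ v ⇝ u ++ [Π [a, b]] ++ v` whenever `[a, b] ∈ D`. -/
def PartialGroup.Contract {M : Type u} (P : PartialGroup M) (x y : List M) : Prop :=
  ∃ (u v : List M) (a b : M), [a, b] ∈ P.D ∧
    x = u ++ [a, b] ++ v ∧ y = u ++ [P.pi [a, b]] ++ v

/-- The reflexive–transitive closure `⇝*` of the single-contraction relation. -/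
def PartialGroup.ContractStar {M : Type u} (P : PartialGroup M) : List M → List M → Prop :=
  Relation.ReflTransGen P.Contract

namespace PartialGroup

variable {M : Type u} (P : PartialGroup M)

lemma wInv_append (u v : List M) : P.wInv (u ++ v) = P.wInv v ++ P.wInv u := by
  simp [wInv]

lemma wInv_cons (a : M) (t : List M) : P.wInv (a :: t) = P.wInv t ++ [P.inv a] := by
  simp [wInv]

lemma wInv_wInv (t : List M) : P.wInv (P.wInv t) = t := by
  simp [wInv, List.map_reverse, List.map_map, Function.comp_def, P.inv_inv]

lemma wInv_singleton (a : M) : P.wInv [a] = [P.inv a] := rfl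

lemma wInv_ne_nil {t : List M} (h : t ≠ []) : P.wInv t ≠ [] := by
  simp [wInv, h]

lemma mem_D_wInv {t : List M} (h : t ∈ P.D) : P.wInv t ∈ P.D :=
  P.mem_D_of_append_left _ t (P.mem_D_inv_append t h)

lemma mem_D_singleton (a : M) : [a] ∈ P.D :=
  P.mem_D_of_length_le_one [a] (by simp)

lemma mem_D_one_pair (b : M) : [P.pi [], b] ∈ P.D := by
  have := P.mem_D_contract [] [] [b] (by simpa using P.mem_D_singleton b)
  simpa using this

lemma pi_one_pair (b : M) : P.pi [P.pi [], b] = b := by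
  have := P.pi_contract [] [] [b] (by simpa using P.mem_D_singleton b)
  simp at this
  rw [← this, P.pi_single]

lemma mem_D_pair_one (a : M) : [a, P.pi []] ∈ P.D := by
  have := P.mem_D_contract [a] [] [] (by simpa using P.mem_D_singleton a)
  simpa using this

lemma pi_pair_one (a : M) : P.pi [a, P.pi []] = a := by
  have := P.pi_contract [a] [] [] (by simpa using P.mem_D_singleton a)
  simp at this
  rw [← this, P.pi_single]

lemma mem_D_invpair (a : M) : [P.inv a, a] ∈ P.D := by
  simpa using P.mem_D_inv_append [a] (P.mem_D_singleton a)

lemma pi_invpair (a : M) : P.pi [P.inv a, a] = P.pi [] := by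
  simpa using P.pi_inv_append [a] (P.mem_D_singleton a)

lemma mem_D_pairinv (a : M) : [a, P.inv a] ∈ P.D := by
  have := P.mem_D_inv_append [P.inv a] (P.mem_D_singleton _)
  simpa [P.inv_inv] using this

lemma pi_pairinv (a : M) : P.pi [a, P.inv a] = P.pi [] := by
  have := P.pi_inv_append [P.inv a] (P.mem_D_singleton _)
  simpa [P.inv_inv] using this

lemma eq_inv_of_pi_pair {d c : M} (h : [d, c] ∈ P.D) (h1 : P.pi [d, c] = P.pi []) :
    d = P.inv c := by
  have hdc : [P.inv c, P.inv d] ∈ P.D := by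
    simpa [wInv] using P.mem_D_wInv h
  have h4 : [d, c, P.inv c, P.inv d] ∈ P.D := by
    have := P.mem_D_inv_append [P.inv c, P.inv d] hdc
    simpa [P.inv_inv] using this
  have h3 : [d, c, P.inv c] ∈ P.D :=
    P.mem_D_of_append_left [d, c, P.inv c] [P.inv d] (by simpa using h4)
  have e1 : P.pi [d, c, P.inv c] = d := by
    have := P.pi_contract [d] [c, P.inv c] [] (by simpa using h3)
    simp [P.pi_pairinv, P.pi_pair_one] at this
    simpa using this
  have e2 : P.pi [d, c, P.inv c] = P.inv c := by
    have := P.pi_contract [] [d, c] [P.inv c] (by simpa using h3)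
    simp [h1, P.pi_one_pair] at this
    simpa using this
  rw [← e1, e2]

lemma pair_inv_mem {a b : M} (h : [a, b] ∈ P.D) : [P.inv b, P.inv a] ∈ P.D := by
  simpa [wInv] using P.mem_D_wInv h

lemma pi_pair_inv {a b : M} (h : [a, b] ∈ P.D) :
    P.pi [P.inv b, P.inv a] = P.inv (P.pi [a, b]) := by
  have h4 : [P.inv b, P.inv a, a, b] ∈ P.D := by
    simpa using P.mem_D_inv_append [a, b] h
  have hp4 : P.pi [P.inv b, P.inv a, a, b] = P.pi [] := by
    simpa using P.pi_inv_append [a, b] h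
  have h3 : [P.inv b, P.inv a, P.pi [a, b]] ∈ P.D := by
    have := P.mem_D_contract [P.inv b, P.inv a] [a, b] [] (by simpa using h4)
    simpa using this
  have hp3 : P.pi [P.inv b, P.inv a, P.pi [a, b]] = P.pi [] := by
    have := P.pi_contract [P.inv b, P.inv a] [a, b] [] (by simpa using h4)
    simp at this
    rw [← this, hp4]
  have hpair : [P.pi [P.inv b, P.inv a], P.pi [a, b]] ∈ P.D := by
    have := P.mem_D_contract [] [P.inv b, P.inv a] [P.pi [a, b]] (by simpa using h3)
    simpa using this
  have hppair : P.pi [P.pi [P.inv b, P.inv a], P.pi [a, b]] = P.pi [] := by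
    have := P.pi_contract [] [P.inv b, P.inv a] [P.pi [a, b]] (by simpa using h3)
    simp at this
    rw [← this, hp3]
  exact P.eq_inv_of_pi_pair hpair hppair

lemma Contract.appendCtx {P : PartialGroup M} {x y : List M} (h : P.Contract x y)
    (s t : List M) : P.Contract (s ++ x ++ t) (s ++ y ++ t) := by
  obtain ⟨u, v, a, b, hD, hx, hy⟩ := h
  exact ⟨s ++ u, v ++ t, a, b, hD, by simp [hx], by simp [hy]⟩

lemma ContractStar.appendCtx {P : PartialGroup M} {x y : List M} (h : P.ContractStar x y)
    (s t : List M) : P.ContractStar (s ++ x ++ t) (s ++ y ++ t) :=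
  Relation.ReflTransGen.lift (fun z => s ++ z ++ t)
    (fun _ _ hc => hc.appendCtx s t) _ _ h

lemma ContractStar.append_right {P : PartialGroup M} {x y : List M} (h : P.ContractStar x y)
    (t : List M) : P.ContractStar (x ++ t) (y ++ t) := by
  simpa using h.appendCtx [] t

lemma ContractStar.append_left {P : PartialGroup M} {x y : List M} (h : P.ContractStar x y)
    (s : List M) : P.ContractStar (s ++ x) (s ++ y) := by
  simpa using h.appendCtx s []

lemma ContractStar.wInv {P : PartialGroup M} {x y : List M} (h : P.ContractStar x y) :
    P.ContractStar (P.wInv x) (P.wInv y) := by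
  refine Relation.ReflTransGen.lift P.wInv (fun p q hc => ?_) _ _ h
  obtain ⟨u, v, a, b, hD, hp, hq⟩ := hc
  refine ⟨P.wInv v, P.wInv u, P.inv b, P.inv a,
    P.pair_inv_mem hD, ?_, ?_⟩
  · simp [hp, P.wInv_append, P.wInv_singleton, wInv_cons]
  · simp [hq, P.wInv_append, P.wInv_singleton, P.pi_pair_inv hD, wInv_cons]

lemma ContractStar.trans {P : PartialGroup M} {x y z : List M}
    (h1 : P.ContractStar x y) (h2 : P.ContractStar y z) : P.ContractStar x z :=
  Relation.ReflTransGen.trans h1 h2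

lemma contract_pair {a b : M} (hD : [a, b] ∈ P.D) (u v : List M) :
    P.ContractStar (u ++ [a, b] ++ v) (u ++ [P.pi [a, b]] ++ v) :=
  Relation.ReflTransGen.single ⟨u, v, a, b, hD, rfl, rfl⟩

lemma one_cons_star {t : List M} (ht : t ≠ []) :
    P.ContractStar ([P.pi []] ++ t) t := by
  obtain ⟨b, s, rfl⟩ := List.exists_cons_of_ne_nil ht
  have := P.contract_pair (P.mem_D_one_pair b) [] s
  simpa [P.pi_one_pair] using this

lemma append_one_star {t : List M} (ht : t ≠ []) :
    P.ContractStar (t ++ [P.pi []]) t := by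
  rcases t.eq_nil_or_concat with rfl | ⟨s, a, rfl⟩
  · exact absurd rfl ht
  · have := P.contract_pair (P.mem_D_pair_one a) s []
    simpa [P.pi_pair_one] using this

lemma wInv_self_star {t : List M} (ht : t ≠ []) :
    P.ContractStar (P.wInv t ++ t) [P.pi []] := by
  induction t with
  | nil => exact absurd rfl ht
  | cons a s ih =>
    rcases eq_or_ne s [] with rfl | hs
    · have := P.contract_pair (P.mem_D_invpair a) [] []
      simpa [P.pi_invpair, wInv] using this
    · have step1 : P.ContractStar (P.wInv (a :: s) ++ (a :: s))
          (P.wInv s ++ ([P.pi []] ++ s)) := by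
        have := P.contract_pair (P.mem_D_invpair a) (P.wInv s) s
        rw [P.pi_invpair] at this
        simpa [P.wInv_cons, List.append_assoc] using this
      have step2 : P.ContractStar (P.wInv s ++ ([P.pi []] ++ s)) (P.wInv s ++ s) :=
        (P.one_cons_star hs).append_left (P.wInv s)
      exact (step1.trans step2).trans (ih hs)

lemma self_wInv_star {t : List M} (ht : t ≠ []) :
    P.ContractStar (t ++ P.wInv t) [P.pi []] := by
  have := P.wInv_self_star (P.wInv_ne_nil ht)
  rwa [P.wInv_wInv] at this

end PartialGroup

/-- Given a zig-zag `w₀, w₁, …, w_{2n}` of nonempty words connecting `[f]` to `[g]`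
(with `w_{2k+1} ⇝* w_{2k}` and `w_{2k+1} ⇝* w_{2k+2}`), the word
`w := w₁ ++ w₃⁻¹ ++ w₅ ++ w₇⁻¹ ++ ⋯ ++ w_{2n−1}` (for `n` odd), resp.
`w := w₁ ++ w₃⁻¹ ++ w₅ ++ ⋯ ++ w_{2n−1}⁻¹ ++ w_{2n}` (for `n` even),
satisfies `w ⇝* [f]` and `w ⇝* [g]`. -/
theorem zigzag_mountain {M : Type u} (P : PartialGroup M) (n : ℕ) (hn : 1 ≤ n)
    (f g : M) (w : ℕ → List M)
    (h0 : w 0 = [f]) (h2n : w (2 * n) = [g])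
    (hne : ∀ i ≤ 2 * n, w i ≠ [])
    (hzig : ∀ k < n, P.ContractStar (w (2 * k + 1)) (w (2 * k)) ∧
      P.ContractStar (w (2 * k + 1)) (w (2 * k + 2))) :
    P.ContractStar
      ((List.flatten ((List.range n).map fun j =>
          if j % 2 = 0 then w (2 * j + 1) else P.wInv (w (2 * j + 1)))) ++
        (if n % 2 = 0 then w (2 * n) else [])) [f] ∧
    P.ContractStar
      ((List.flatten ((List.range n).map fun j =>
          if j % 2 = 0 then w (2 * j + 1) else P.wInv (w (2 * j + 1)))) ++
        (if n % 2 = 0 then w (2 * n) else [])) [g] := by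

  classical
  set F : ℕ → List M := fun m => List.flatten ((List.range m).map fun j =>
    if j % 2 = 0 then w (2 * j + 1) else P.wInv (w (2 * j + 1))) with hFdef
  have hF : ∀ m, F (m + 1) = F m ++
      (if m % 2 = 0 then w (2 * m + 1) else P.wInv (w (2 * m + 1))) := by
    intro m; simp [hFdef, List.range_succ]
  have key : ∀ m, 1 ≤ m → m ≤ n →
      (m % 2 = 1 → P.ContractStar (F m) (w 0) ∧ P.ContractStar (F m) (w (2 * m))) ∧
      (m % 2 = 0 → P.ContractStar (F m) (w 0 ++ P.wInv (w (2 * m))) ∧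
        P.ContractStar (F m) [P.pi []]) := by
    intro m hm
    induction m, hm using Nat.le_induction with
    | base =>
      intro _
      refine ⟨fun _ => ?_, fun h => by omega⟩
      have h1 : F 1 = w 1 := by simp [hFdef, List.range_succ]
      have hz := hzig 0 (by omega)
      rw [h1]
      exact ⟨by simpa using hz.1, by simpa using hz.2⟩
    | succ m hm ih =>
      intro hle
      have ihm := ih (by omega)
      have hz := hzig m (by omega)
      rcases Nat.mod_two_eq_zero_or_one m with hm2 | hm2
      · -- m even, m + 1 odd
        obtain ⟨hA, hB⟩ := ihm.2 hm2
        have hFm : F (m + 1) = F m ++ w (2 * m + 1) := by rw [hF m, if_pos hm2]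
        refine ⟨fun _ => ?_, fun h => by omega⟩
        constructor
        · have s1 : P.ContractStar (F (m + 1)) ((w 0 ++ P.wInv (w (2 * m))) ++ w (2 * m + 1)) := by
            rw [hFm]; exact hA.append_right _
          have s2 : P.ContractStar ((w 0 ++ P.wInv (w (2 * m))) ++ w (2 * m + 1))
              (w 0 ++ (P.wInv (w (2 * m)) ++ w (2 * m))) := by
            have := hz.1.append_left (w 0 ++ P.wInv (w (2 * m)))
            simpa [List.append_assoc] using this
          have s3 : P.ContractStar (w 0 ++ (P.wInv (w (2 * m)) ++ w (2 * m)))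
              (w 0 ++ [P.pi []]) :=
            (P.wInv_self_star (hne (2 * m) (by omega))).append_left (w 0)
          have s4 : P.ContractStar (w 0 ++ [P.pi []]) (w 0) :=
            P.append_one_star (hne 0 (by omega))
          exact ((s1.trans s2).trans s3).trans s4
        · have s1 : P.ContractStar (F (m + 1)) ([P.pi []] ++ w (2 * m + 1)) := by
            rw [hFm]; exact hB.append_right _
          have s2 : P.ContractStar ([P.pi []] ++ w (2 * m + 1))
              ([P.pi []] ++ w (2 * m + 2)) := hz.2.append_left _
          have s3 : P.ContractStar ([P.pi []] ++ w (2 * m + 2)) (w (2 * m + 2)) :=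
            P.one_cons_star (hne (2 * m + 2) (by omega))
          have : P.ContractStar (F (m + 1)) (w (2 * m + 2)) := (s1.trans s2).trans s3
          have he : 2 * (m + 1) = 2 * m + 2 := by ring
          rwa [he]
      · -- m odd, m + 1 even
        obtain ⟨hA, hB⟩ := ihm.1 hm2
        have hFm : F (m + 1) = F m ++ P.wInv (w (2 * m + 1)) := by
          rw [hF m, if_neg (by omega)]
        refine ⟨fun h => by omega, fun _ => ?_⟩
        constructor
        · have s1 : P.ContractStar (F (m + 1)) (w 0 ++ P.wInv (w (2 * m + 1))) := by
            rw [hFm]; exact hA.append_right _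
          have s2 : P.ContractStar (w 0 ++ P.wInv (w (2 * m + 1)))
              (w 0 ++ P.wInv (w (2 * m + 2))) := hz.2.wInv.append_left _
          have : P.ContractStar (F (m + 1)) (w 0 ++ P.wInv (w (2 * m + 2))) := s1.trans s2
          have he : 2 * (m + 1) = 2 * m + 2 := by ring
          rwa [he]
        · have s1 : P.ContractStar (F (m + 1)) (w (2 * m) ++ P.wInv (w (2 * m + 1))) := by
            rw [hFm]; exact hB.append_right _
          have s2 : P.ContractStar (w (2 * m) ++ P.wInv (w (2 * m + 1)))
              (w (2 * m) ++ P.wInv (w (2 * m))) := hz.1.wInv.append_left _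
          have s3 : P.ContractStar (w (2 * m) ++ P.wInv (w (2 * m))) [P.pi []] :=
            P.self_wInv_star (hne (2 * m) (by omega))
          exact (s1.trans s2).trans s3
  rcases Nat.mod_two_eq_zero_or_one n with hn2 | hn2
  · -- n even
    obtain ⟨hA, hB⟩ := (key n hn le_rfl).2 hn2
    rw [if_pos hn2, ← h0, ← h2n]
    constructor
    · show P.ContractStar (F n ++ w (2 * n)) (w 0)
      have s1 : P.ContractStar (F n ++ w (2 * n)) ((w 0 ++ P.wInv (w (2 * n))) ++ w (2 * n)) :=
        hA.append_right _
      have s2 : P.ContractStar ((w 0 ++ P.wInv (w (2 * n))) ++ w (2 * n))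
          (w 0 ++ [P.pi []]) := by
        have := (P.wInv_self_star (hne (2 * n) le_rfl)).append_left (w 0)
        simpa [List.append_assoc] using this
      have s3 : P.ContractStar (w 0 ++ [P.pi []]) (w 0) :=
        P.append_one_star (hne 0 (by omega))
      exact (s1.trans s2).trans s3
    · show P.ContractStar (F n ++ w (2 * n)) (w (2 * n))
      have s1 : P.ContractStar (F n ++ w (2 * n)) ([P.pi []] ++ w (2 * n)) :=
        hB.append_right _
      have s2 : P.ContractStar ([P.pi []] ++ w (2 * n)) (w (2 * n)) :=
        P.one_cons_star (hne (2 * n) le_rfl)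
      exact s1.trans s2
  · -- n odd
    obtain ⟨hA, hB⟩ := (key n hn le_rfl).1 hn2
    rw [if_neg (by omega), ← h0, ← h2n]
    constructor
    · show P.ContractStar (F n ++ []) (w 0)
      simpa using hA
    · show P.ContractStar (F n ++ []) (w (2 * n))
      simpa using hB
end
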